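/- Let o₁ = [l₁,u₁] and o₂ = [l₂,u₂] be two non-overlapping uncertain 1D objects, i.e. u₁ ≤ l₂, with (possibly different) lengths n₁ = u₁ − l₁ and n₂ = u₂ − l₂, and let b = (m₁ + m₂)/2 be the bisector of their midpoints m₁ = (l₁+u₁)/2 and m₂ = (l₂+u₂)/2. Then p(b) = 1/2; moreover p(q) > 1/2 for every q < b, and p(q) < 1/2 for every q > b. In other words, the probabilistic bisector of two non-overlapping 1D objects is the bisector of their midpoints. -/

import Mathlib

open MeasureTheory
open scoped ENNReal

/-- The uniform probability measure on the closed interval `[a, b]`. -/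
noncomputable def unif (a b : ℝ) : Measure ℝ :=
  (volume (Set.Icc a b))⁻¹ • volume.restrict (Set.Icc a b)

/-- Probability that the uncertain object `[l₁,u₁]` is nearer to the query point `q`
than the uncertain object `[l₂,u₂]`. -/
noncomputable def nnProb (l₁ u₁ l₂ u₂ q : ℝ) : ℝ≥0∞ :=
  ((unif l₁ u₁).prod (unif l₂ u₂)) {xy : ℝ × ℝ | |xy.1 - q| < |xy.2 - q|}

lemma aux_smul_prod (c₁ c₂ : ℝ≥0∞) (μ ν : Measure ℝ) [SFinite μ] [SFinite ν]
    {s : Set (ℝ×ℝ)} (hs : MeasurableSet s) :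
    ((c₁ • μ).prod (c₂ • ν)) s = c₁ * (c₂ * (μ.prod ν) s) := by
  rw [Measure.prod_apply hs, Measure.prod_apply hs, lintegral_smul_measure]
  simp only [Measure.smul_apply, smul_eq_mul]
  rw [lintegral_const_mul c₂ (measurable_measure_prodMk_left hs)]

/-- For `x < y`, being nearer to `x` than `y` is equivalent to `2q < x + y`. -/
lemma aux_abs_iff {x y q : ℝ} (hxy : x < y) : |x - q| < |y - q| ↔ 2*q < x + y := by
  constructor
  · intro h
    have h2 : (x-q) * (x-q) < (y-q) * (y-q) := by
      have := mul_self_lt_mul_self (abs_nonneg (x-q)) h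
      rwa [abs_mul_abs_self, abs_mul_abs_self] at this
    nlinarith
  · intro h
    by_contra hc
    push_neg at hc
    have h2 : (y-q) * (y-q) ≤ (x-q) * (x-q) := by
      have := mul_self_le_mul_self (abs_nonneg (y-q)) hc
      rwa [abs_mul_abs_self, abs_mul_abs_self] at this
    nlinarith

/-- Key representation of `nnProb` for non-overlapping objects. -/
lemma aux_key (l₁ u₁ l₂ u₂ q : ℝ) (h₁ : l₁ < u₁) (h₂ : l₂ < u₂) (hsep : u₁ ≤ l₂) :
    nnProb l₁ u₁ l₂ u₂ q =
      (ENNReal.ofReal (u₁ - l₁))⁻¹ * ((ENNReal.ofReal (u₂ - l₂))⁻¹ *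
        volume ((Set.Icc l₁ u₁ ×ˢ Set.Icc l₂ u₂) ∩ {p : ℝ × ℝ | 2*q < p.1 + p.2})) := by
  have hE : MeasurableSet {xy : ℝ × ℝ | |xy.1 - q| < |xy.2 - q|} :=
    measurableSet_lt ((measurable_fst.sub measurable_const).abs)
      ((measurable_snd.sub measurable_const).abs)
  rw [nnProb, unif, unif, Real.volume_Icc, Real.volume_Icc,
    aux_smul_prod _ _ _ _ hE, Measure.prod_restrict, ← Measure.volume_eq_prod,
    Measure.restrict_apply hE]
  congr 2
  -- the two sets agree off the single point (u₁, l₂)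
  have hpt : (volume : Measure (ℝ×ℝ)) {((u₁ : ℝ), (l₂ : ℝ))} = 0 := by simp
  have hd : ∀ A : Set (ℝ×ℝ), volume (A \ {((u₁ : ℝ), (l₂ : ℝ))}) = volume A :=
    fun A => measure_diff_null hpt
  rw [← hd ({xy : ℝ × ℝ | |xy.1 - q| < |xy.2 - q|} ∩ Set.Icc l₁ u₁ ×ˢ Set.Icc l₂ u₂),
    ← hd (Set.Icc l₁ u₁ ×ˢ Set.Icc l₂ u₂ ∩ {p : ℝ × ℝ | 2*q < p.1 + p.2})]
  have hlt : ∀ x y : ℝ, (l₁ ≤ x ∧ x ≤ u₁) ∧ (l₂ ≤ y ∧ y ≤ u₂) → ¬(x = u₁ ∧ y = l₂) → x < y := by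
    intro x y hR hne
    rcases lt_or_eq_of_le (le_trans hR.1.2 (le_trans hsep hR.2.1)) with h | h
    · exact h
    · have hx : x = u₁ := le_antisymm hR.1.2 (by linarith [hR.2.1])
      have hy : y = l₂ := le_antisymm (by linarith [hR.1.2]) hR.2.1
      exact absurd ⟨hx, hy⟩ hne
  congr 1
  ext ⟨x, y⟩
  simp only [Set.mem_diff, Set.mem_inter_iff, Set.mem_setOf_eq, Set.mem_prod, Set.mem_Icc,
    Set.mem_singleton_iff, Prod.mk.injEq]
  constructor
  · rintro ⟨⟨habs, hR⟩, hne⟩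
    exact ⟨⟨hR, (aux_abs_iff (hlt x y hR hne)).1 habs⟩, hne⟩
  · rintro ⟨⟨hR, hsum⟩, hne⟩
    exact ⟨⟨(aux_abs_iff (hlt x y hR hne)).2 hsum, hR⟩, hne⟩

theorem prob_bisector_non_overlapping (l₁ u₁ l₂ u₂ b : ℝ)
    (h₁ : l₁ < u₁) (h₂ : l₂ < u₂)
    (hsep : u₁ ≤ l₂)
    (hb : b = ((l₁ + u₁) / 2 + (l₂ + u₂) / 2) / 2) :
    nnProb l₁ u₁ l₂ u₂ b = 1 / 2 ∧
    (∀ q : ℝ, q < b → nnProb l₁ u₁ l₂ u₂ q > 1 / 2) ∧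
    (∀ q : ℝ, q > b → nnProb l₁ u₁ l₂ u₂ q < 1 / 2) := by
  have hn₁ : (0:ℝ) < u₁ - l₁ := by linarith
  have hn₂ : (0:ℝ) < u₂ - l₂ := by linarith
  set R : Set (ℝ×ℝ) := Set.Icc l₁ u₁ ×ˢ Set.Icc l₂ u₂ with hRdef
  set c : ℝ≥0∞ := (ENNReal.ofReal (u₁ - l₁))⁻¹ * (ENNReal.ofReal (u₂ - l₂))⁻¹ with hcdef
  set T : ℝ → Set (ℝ×ℝ) := fun q => R ∩ {p : ℝ×ℝ | 2*q < p.1+p.2} with hTdef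
  have key : ∀ q, nnProb l₁ u₁ l₂ u₂ q = c * volume (T q) := by
    intro q
    rw [aux_key l₁ u₁ l₂ u₂ q h₁ h₂ hsep, hcdef, mul_assoc]
  have hRm : MeasurableSet R := measurableSet_Icc.prod measurableSet_Icc
  have hTm : ∀ q, MeasurableSet (T q) := fun q =>
    hRm.inter (measurableSet_lt measurable_const (measurable_fst.add measurable_snd))
  have hvolR : volume R = ENNReal.ofReal (u₁-l₁) * ENNReal.ofReal (u₂-l₂) := by
    rw [hRdef, Measure.volume_eq_prod, Measure.prod_prod, Real.volume_Icc, Real.volume_Icc]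
  have hRtop : volume R ≠ ⊤ := by
    rw [hvolR]; exact ENNReal.mul_ne_top ENNReal.ofReal_ne_top ENNReal.ofReal_ne_top
  have h1ne : ENNReal.ofReal (u₁-l₁) ≠ 0 := (ENNReal.ofReal_pos.mpr hn₁).ne'
  have h2ne : ENNReal.ofReal (u₂-l₂) ≠ 0 := (ENNReal.ofReal_pos.mpr hn₂).ne'
  have hc1 : c * volume R = 1 := by
    rw [hvolR, hcdef]
    rw [show ((ENNReal.ofReal (u₁ - l₁))⁻¹ * (ENNReal.ofReal (u₂ - l₂))⁻¹) *
        (ENNReal.ofReal (u₁-l₁) * ENNReal.ofReal (u₂-l₂)) =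
        ((ENNReal.ofReal (u₁ - l₁))⁻¹ * ENNReal.ofReal (u₁-l₁)) *
        ((ENNReal.ofReal (u₂ - l₂))⁻¹ * ENNReal.ofReal (u₂-l₂)) from by ring]
    rw [ENNReal.inv_mul_cancel h1ne ENNReal.ofReal_ne_top,
      ENNReal.inv_mul_cancel h2ne ENNReal.ofReal_ne_top, one_mul]
  have hc0 : c ≠ 0 := mul_ne_zero (ENNReal.inv_ne_zero.mpr ENNReal.ofReal_ne_top)
    (ENNReal.inv_ne_zero.mpr ENNReal.ofReal_ne_top)
  have hctop : c ≠ ⊤ := ENNReal.mul_ne_top (ENNReal.inv_ne_top.mpr h1ne)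
    (ENNReal.inv_ne_top.mpr h2ne)
  have hTtop : ∀ q, volume (T q) ≠ ⊤ := fun q =>
    ne_top_of_le_ne_top hRtop (measure_mono Set.inter_subset_left)
  -- symmetry at b
  set T' : Set (ℝ×ℝ) := R ∩ {p : ℝ×ℝ | p.1+p.2 < 2*b} with hT'def
  have hT'm : MeasurableSet T' :=
    hRm.inter (measurableSet_lt (measurable_fst.add measurable_snd) measurable_const)
  have hpre : (fun p : ℝ×ℝ => ((l₁+u₁, l₂+u₂) : ℝ×ℝ) - p) ⁻¹' (T b) = T' := by
    ext ⟨x, y⟩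
    simp only [hTdef, hT'def, hRdef, Set.mem_preimage, Set.mem_inter_iff, Set.mem_prod,
      Set.mem_Icc, Set.mem_setOf_eq, Prod.mk_sub_mk, Prod.fst, Prod.snd]
    constructor
    · rintro ⟨⟨⟨ha, hb'⟩, ⟨hc', hd⟩⟩, he⟩
      refine ⟨⟨⟨?_, ?_⟩, ⟨?_, ?_⟩⟩, ?_⟩ <;> linarith
    · rintro ⟨⟨⟨ha, hb'⟩, ⟨hc', hd⟩⟩, he⟩
      refine ⟨⟨⟨?_, ?_⟩, ⟨?_, ?_⟩⟩, ?_⟩ <;> linarith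
  have hvolT' : volume T' = volume (T b) := by
    rw [← hpre]
    exact (Measure.measurePreserving_sub_left (volume : Measure (ℝ×ℝ))
      ((l₁+u₁, l₂+u₂) : ℝ×ℝ)).measure_preimage (hTm b).nullMeasurableSet
  have hline : volume (R ∩ {p : ℝ×ℝ | p.1+p.2 = 2*b}) = 0 := by
    have hm : MeasurableSet (R ∩ {p : ℝ×ℝ | p.1+p.2 = 2*b}) :=
      hRm.inter (measurableSet_eq_fun (measurable_fst.add measurable_snd) measurable_const)
    rw [Measure.volume_eq_prod, Measure.measure_prod_null hm]
    filter_upwards with x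
    have hsub : (Prod.mk x ⁻¹' (R ∩ {p : ℝ×ℝ | p.1+p.2 = 2*b})) ⊆ {2*b - x} := by
      intro y hy
      have : x + y = 2*b := hy.2
      simp only [Set.mem_singleton_iff]; linarith
    exact measure_mono_null hsub (measure_singleton _)
  have hsplit : volume R = volume (T b) + volume T' := by
    have h1 : volume R = volume (R \ (R ∩ {p : ℝ×ℝ | p.1+p.2 = 2*b})) :=
      (measure_diff_null hline).symm
    have hunion : R \ (R ∩ {p : ℝ×ℝ | p.1+p.2 = 2*b}) = T b ∪ T' := by
      ext ⟨x, y⟩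
      simp only [hTdef, hT'def, Set.mem_diff, Set.mem_inter_iff, Set.mem_setOf_eq,
        Set.mem_union, not_and]
      constructor
      · rintro ⟨hR', hne⟩
        rcases lt_trichotomy (x + y) (2*b) with h | h | h
        · exact Or.inr ⟨hR', h⟩
        · exact absurd h (hne hR')
        · exact Or.inl ⟨hR', h⟩
      · rintro (⟨hR', h⟩ | ⟨hR', h⟩) <;> exact ⟨hR', fun _ => by intro hh; linarith⟩
    have hdisj : Disjoint (T b) T' := by
      rw [Set.disjoint_left]
      rintro ⟨x, y⟩ ⟨_, hp1⟩ ⟨_, hp2⟩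
      simp only [Set.mem_setOf_eq] at hp1 hp2
      linarith
    rw [h1, hunion, measure_union hdisj hT'm]
  have hhalf : nnProb l₁ u₁ l₂ u₂ b = 1/2 := by
    have h2x : 2 * (c * volume (T b)) = 1 := by
      rw [← hc1, hsplit, hvolT']; ring
    rw [key b]
    exact (ENNReal.eq_div_iff two_ne_zero ENNReal.ofNat_ne_top).mpr h2x
  refine ⟨hhalf, ?_, ?_⟩
  · intro q hq
    set δ : ℝ := min (b - q) (min ((u₁-l₁)/2) ((u₂-l₂)/2)) with hδdef
    have hδpos : 0 < δ := lt_min (by linarith) (lt_min (by linarith) (by linarith))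
    have hδ1 : δ ≤ b - q := min_le_left _ _
    have hδ2 : δ ≤ (u₁-l₁)/2 := le_trans (min_le_right _ _) (min_le_left _ _)
    have hδ3 : δ ≤ (u₂-l₂)/2 := le_trans (min_le_right _ _) (min_le_right _ _)
    set B : Set (ℝ×ℝ) := Set.Ioo ((l₁+u₁)/2 - δ) ((l₁+u₁)/2) ×ˢ
      Set.Ioo ((l₂+u₂)/2 - δ) ((l₂+u₂)/2) with hBdef
    have hBm : MeasurableSet B := measurableSet_Ioo.prod measurableSet_Ioo
    have hBne : volume B ≠ 0 := by
      rw [hBdef, Measure.volume_eq_prod, Measure.prod_prod, Real.volume_Ioo, Real.volume_Ioo]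
      have hd : (l₁+u₁)/2 - ((l₁+u₁)/2 - δ) = δ := by ring
      have hd2 : (l₂+u₂)/2 - ((l₂+u₂)/2 - δ) = δ := by ring
      rw [hd, hd2]
      exact mul_ne_zero (ENNReal.ofReal_pos.mpr hδpos).ne' (ENNReal.ofReal_pos.mpr hδpos).ne'
    have hBsub : B ⊆ T q := by
      rintro ⟨x, y⟩ ⟨⟨hx1, hx2⟩, ⟨hy1, hy2⟩⟩
      exact ⟨⟨⟨by linarith, by linarith⟩, ⟨by linarith, by linarith⟩⟩,
        by simp only [Set.mem_setOf_eq]; linarith⟩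
    have hTsub : T b ⊆ T q := fun p hp =>
      ⟨hp.1, by have := hp.2; simp only [Set.mem_setOf_eq] at *; linarith⟩
    have hdisjB : Disjoint (T b) B := by
      rw [Set.disjoint_left]
      rintro ⟨x, y⟩ ⟨_, hp⟩ ⟨⟨_, hx2⟩, ⟨_, hy2⟩⟩
      simp only [Set.mem_setOf_eq] at hp
      linarith
    have hlb : volume (T b) + volume B ≤ volume (T q) := by
      rw [← measure_union hdisjB hBm]
      exact measure_mono (Set.union_subset hTsub hBsub)
    have hlt : volume (T b) < volume (T q) :=
      lt_of_lt_of_le (ENNReal.lt_add_right (hTtop b) hBne) hlb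
    have : nnProb l₁ u₁ l₂ u₂ b < nnProb l₁ u₁ l₂ u₂ q := by
      rw [key b, key q]
      exact (ENNReal.mul_lt_mul_iff_right hc0 hctop).mpr hlt
    rw [hhalf] at this
    exact this
  · intro q hq
    set δ : ℝ := min (q - b) (min ((u₁-l₁)/2) ((u₂-l₂)/2)) with hδdef
    have hδpos : 0 < δ := lt_min (by linarith) (lt_min (by linarith) (by linarith))
    have hδ1 : δ ≤ q - b := min_le_left _ _
    have hδ2 : δ ≤ (u₁-l₁)/2 := le_trans (min_le_right _ _) (min_le_left _ _)
    have hδ3 : δ ≤ (u₂-l₂)/2 := le_trans (min_le_right _ _) (min_le_right _ _)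
    set B : Set (ℝ×ℝ) := Set.Ioo ((l₁+u₁)/2) ((l₁+u₁)/2 + δ) ×ˢ
      Set.Ioo ((l₂+u₂)/2) ((l₂+u₂)/2 + δ) with hBdef
    have hBm : MeasurableSet B := measurableSet_Ioo.prod measurableSet_Ioo
    have hBne : volume B ≠ 0 := by
      rw [hBdef, Measure.volume_eq_prod, Measure.prod_prod, Real.volume_Ioo, Real.volume_Ioo]
      have hd : (l₁+u₁)/2 + δ - (l₁+u₁)/2 = δ := by ring
      have hd2 : (l₂+u₂)/2 + δ - (l₂+u₂)/2 = δ := by ring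
      rw [hd, hd2]
      exact mul_ne_zero (ENNReal.ofReal_pos.mpr hδpos).ne' (ENNReal.ofReal_pos.mpr hδpos).ne'
    have hBsub : B ⊆ T b := by
      rintro ⟨x, y⟩ ⟨⟨hx1, hx2⟩, ⟨hy1, hy2⟩⟩
      exact ⟨⟨⟨by linarith, by linarith⟩, ⟨by linarith, by linarith⟩⟩,
        by simp only [Set.mem_setOf_eq]; linarith⟩
    have hTsub : T q ⊆ T b := fun p hp =>
      ⟨hp.1, by have := hp.2; simp only [Set.mem_setOf_eq] at *; linarith⟩
    have hdisjB : Disjoint (T q) B := by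
      rw [Set.disjoint_left]
      rintro ⟨x, y⟩ ⟨_, hp⟩ ⟨⟨hx1, hx2⟩, ⟨hy1, hy2⟩⟩
      simp only [Set.mem_setOf_eq] at hp
      linarith
    have hlb : volume (T q) + volume B ≤ volume (T b) := by
      rw [← measure_union hdisjB hBm]
      exact measure_mono (Set.union_subset hTsub hBsub)
    have hlt : volume (T q) < volume (T b) :=
      lt_of_lt_of_le (ENNReal.lt_add_right (hTtop q) hBne) hlb
    have : nnProb l₁ u₁ l₂ u₂ q < nnProb l₁ u₁ l₂ u₂ b := by
      rw [key b, key q]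
      exact (ENNReal.mul_lt_mul_iff_right hc0 hctop).mpr hlt
    rw [hhalf] at this
    exact this
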